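/- arXiv:0707.0213 — 3 statements merged into one kernel-verified Lean document; each statement's English description precedes it below -/
import Mathlib

section
/- For every odd n ≥ 3 there exists a set of n points on a circle in ℝ² of diameter 1 with exactly n pairs at distance 1. -/
open Real Finset

namespace Stmt14Aux

/-- The point at angle `θ` on the circle of radius `r` centered at origin. -/
noncomputable def pt (r θ : ℝ) : EuclideanSpace ℝ (Fin 2) := WithLp.toLp 2 ![r * Real.cos θ, r * Real.sin θ]

lemma pt_apply_zero (r θ : ℝ) : pt r θ 0 = r * Real.cos θ := rfl
lemma pt_apply_one (r θ : ℝ) : pt r θ 1 = r * Real.sin θ := rfl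

lemma dist_pt (r A B : ℝ) (hr : 0 ≤ r) :
    dist (pt r A) (pt r B) = 2 * r * |Real.sin ((A - B) / 2)| := by
  rw [EuclideanSpace.dist_eq]
  rw [Fin.sum_univ_two]
  rw [pt_apply_zero, pt_apply_zero, pt_apply_one, pt_apply_one]
  have h1 : Real.cos (A - B) = 1 - 2 * Real.sin ((A - B) / 2) ^ 2 := by
    have := Real.cos_two_mul ((A - B) / 2)
    have h2 := Real.sin_sq_add_cos_sq ((A - B) / 2)
    have : Real.cos (2 * ((A - B) / 2)) = 2 * Real.cos ((A - B) / 2) ^ 2 - 1 := this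
    rw [show 2 * ((A - B) / 2) = A - B by ring] at this
    nlinarith
  have hcs : Real.cos (A - B) = Real.cos A * Real.cos B + Real.sin A * Real.sin B :=
    Real.cos_sub A B
  have key : dist (r * Real.cos A) (r * Real.cos B) ^ 2
      + dist (r * Real.sin A) (r * Real.sin B) ^ 2
      = (2 * r * |Real.sin ((A - B) / 2)|) ^ 2 := by
    rw [Real.dist_eq, Real.dist_eq, sq_abs, sq_abs]
    have hsq : |Real.sin ((A - B) / 2)| ^ 2 = Real.sin ((A - B) / 2) ^ 2 := sq_abs _
    have hA := Real.sin_sq_add_cos_sq A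
    have hB := Real.sin_sq_add_cos_sq B
    rw [mul_pow, mul_pow, sq_abs]
    linear_combination r^2*hA + r^2*hB + 2*r^2*hcs - 2*r^2*h1
  rw [key, Real.sqrt_sq (by positivity)]

lemma dist_pt_center (r θ : ℝ) (hr : 0 ≤ r) : dist (pt r θ) 0 = r := by
  rw [EuclideanSpace.dist_eq, Fin.sum_univ_two]
  have h0 : (0 : EuclideanSpace ℝ (Fin 2)) 0 = 0 := rfl
  have h1 : (0 : EuclideanSpace ℝ (Fin 2)) 1 = 0 := rfl
  rw [pt_apply_zero, pt_apply_one, h0, h1]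
  have := Real.sin_sq_add_cos_sq θ
  have : dist (r * Real.cos θ) 0 ^ 2 + dist (r * Real.sin θ) 0 ^ 2 = r ^ 2 := by
    rw [Real.dist_eq, Real.dist_eq, sub_zero, sub_zero, sq_abs, sq_abs]; nlinarith
  rw [this, Real.sqrt_sq hr]

/-- Core analytic lemma: for `0 ≤ m < n`, `sin (π m / n) ≤ cos (π / (2n))`,
with equality iff `2m = n - 1` or `2m = n + 1`. -/
lemma sin_le (n m : ℕ) (hn : 3 ≤ n) (hodd : Odd n) (hm : m < n) :
    Real.sin (π * m / n) ≤ Real.cos (π / (2 * n)) ∧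
    (Real.sin (π * m / n) = Real.cos (π / (2 * n)) ↔ 2 * m + 1 = n ∨ 2 * m = n + 1) := by
  have hN : (0 : ℝ) < n := by positivity
  have hπ := Real.pi_pos
  -- cos (π/(2n)) = sin (π (n-1) / (2n))
  have hco : Real.cos (π / (2 * n)) = Real.sin (π * (n - 1) / (2 * (n : ℝ))) := by
    rw [← Real.sin_pi_div_two_sub]
    congr 1
    field_simp
  -- helper: for real x with 0 ≤ x ≤ (n-1)/2 (as multiples), monotonicity
  have mem_Icc : ∀ x : ℝ, 0 ≤ x → 2 * x ≤ (n : ℝ) - 1 →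
      π * x / n ∈ Set.Icc (-(π/2)) (π/2) := by
    intro x hx0 hx1
    constructor
    · have : 0 ≤ π * x / n := by positivity
      linarith
    · rw [div_le_iff₀ hN]
      nlinarith
  have hn1 : (1 : ℝ) ≤ n := by exact_mod_cast le_trans (by norm_num) hn
  have target_mem : π * ((n : ℝ) - 1) / (2 * n) ∈ Set.Icc (-(π/2)) (π/2) := by
    constructor
    · have : (0:ℝ) ≤ π * ((n : ℝ) - 1) / (2 * n) :=
        div_nonneg (mul_nonneg hπ.le (by linarith)) (by positivity)
      linarith
    · rw [div_le_iff₀ (by positivity)]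
      nlinarith
  have key : ∀ m' : ℕ, 2 * m' + 1 ≤ n →
      Real.sin (π * m' / n) ≤ Real.sin (π * ((n : ℝ) - 1) / (2 * n)) ∧
      (Real.sin (π * m' / n) = Real.sin (π * ((n : ℝ) - 1) / (2 * n)) ↔ 2 * m' + 1 = n) := by
    intro m' hm'
    have hm'R : 2 * (m' : ℝ) + 1 ≤ n := by exact_mod_cast hm'
    have h1 : π * (m' : ℝ) / n ∈ Set.Icc (-(π/2)) (π/2) :=
      mem_Icc m' (Nat.cast_nonneg _) (by linarith)
    have hle : π * (m' : ℝ) / n ≤ π * ((n : ℝ) - 1) / (2 * n) := by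
      rw [div_le_div_iff₀ hN (by positivity)]
      nlinarith [mul_le_mul_of_nonneg_left (show 2*(m':ℝ) ≤ n - 1 by linarith)
        (le_of_lt (mul_pos hπ hN))]
    constructor
    · exact Real.strictMonoOn_sin.monotoneOn h1 target_mem hle
    · constructor
      · intro h
        have heq := Real.strictMonoOn_sin.injOn h1 target_mem h
        field_simp at heq
        have h2 : (π*(n:ℝ)) * (2*(m':ℝ)) = (π*(n:ℝ)) * ((n:ℝ)-1) := by linear_combination (π*(n:ℝ)) * heq
        have h3 := mul_left_cancel₀ (ne_of_gt (mul_pos hπ hN)) h2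
        have : 2 * m' + 1 = n := by exact_mod_cast (by linarith : (2 * m' + 1 : ℝ) = n)
        exact this
      · intro h
        congr 1
        have hc : (2 * (m' : ℝ)) + 1 = n := by exact_mod_cast h
        field_simp
        linear_combination hc
  -- n is odd, so either 2m+1 ≤ n or 2m ≥ n+1
  rcases le_or_gt (2 * m + 1) n with hc | hc
  · have := key m hc
    rw [hco]
    refine ⟨this.1, ?_⟩
    rw [this.2]
    constructor
    · exact Or.inl
    · rintro (h | h)
      · exact h
      · omega
  · -- 2m ≥ n + 1 (since n odd, 2m ≠ n); use sin (π m / n) = sin (π (n - m) / n)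
    have h2m : n + 1 ≤ 2 * m := by
      rcases hodd with ⟨t, ht⟩
      omega
    have hnm : 2 * (n - m) + 1 ≤ n := by omega
    have hmn : m ≤ n := le_of_lt hm
    have hrefl : Real.sin (π * m / n) = Real.sin (π * (↑(n - m)) / n) := by
      have hcast : ((n - m : ℕ) : ℝ) = (n : ℝ) - m := by
        have : (m : ℝ) ≤ n := by exact_mod_cast hmn
        push_cast [Nat.cast_sub hmn]
        ring
      rw [hcast]
      rw [show π * ((n : ℝ) - m) / n = π - π * m / n by field_simp]
      rw [Real.sin_pi_sub]
    have := key (n - m) hnm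
    rw [hco, hrefl]
    refine ⟨this.1, ?_⟩
    rw [this.2]
    omega

lemma sin_div_nonneg (n d : ℕ) (hn : 0 < n) (h : d ≤ n) : 0 ≤ Real.sin (π * d / n) := by
  have hN : (0:ℝ) < n := by positivity
  have hπ := Real.pi_pos
  apply Real.sin_nonneg_of_nonneg_of_le_pi
  · positivity
  · rw [div_le_iff₀ hN]
    have : (d:ℝ) ≤ n := by exact_mod_cast h
    nlinarith

lemma abs_sin_eq (n : ℕ) [NeZero n] (j k : ZMod n) :
    |Real.sin ((2*π*j.val/n - 2*π*k.val/n)/2)| = Real.sin (π * ((j - k).val : ℝ) / n) := by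
  have hn : 0 < n := NeZero.pos n
  have hN : (0:ℝ) < n := by positivity
  have hj : ((j.val : ℕ) : ZMod n) = j := by rw [ZMod.natCast_val, ZMod.cast_id]
  have hk : ((k.val : ℕ) : ZMod n) = k := by rw [ZMod.natCast_val, ZMod.cast_id]
  have hjlt := ZMod.val_lt j
  have hklt := ZMod.val_lt k
  have hx : (2*π*j.val/n - 2*π*k.val/n)/2 = π * ((j.val:ℝ) - k.val) / n := by ring
  rw [hx]
  rcases le_or_gt k.val j.val with h | h
  · have hjk : (j - k).val = j.val - k.val := by
      have he : j - k = (((j.val - k.val : ℕ)) : ZMod n) := by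
        rw [Nat.cast_sub h, hj, hk]
      rw [he, ZMod.val_cast_of_lt (by omega)]
    have hcast : ((j.val:ℝ) - k.val) = ((j.val - k.val : ℕ) : ℝ) := by
      rw [Nat.cast_sub h]
    rw [hcast, hjk]
    exact abs_of_nonneg (sin_div_nonneg n _ hn (by omega))
  · set d : ℕ := n - (k.val - j.val) with hd
    have hd1 : 1 ≤ d := by omega
    have hdn : d < n := by omega
    have hjk : (j - k).val = d := by
      have he : ((d : ℕ) : ZMod n) = j - k := by
        rw [hd, Nat.cast_sub (show k.val - j.val ≤ n by omega),
          Nat.cast_sub h.le, ZMod.natCast_self, hj, hk]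
        ring
      rw [← he, ZMod.val_cast_of_lt hdn]
    have hcast : ((j.val:ℝ) - k.val) = ((d:ℕ):ℝ) - n := by
      have : ((d:ℕ):ℝ) = (n:ℝ) - ((k.val:ℝ) - j.val) := by
        rw [hd, Nat.cast_sub (show k.val - j.val ≤ n by omega),
          Nat.cast_sub h.le]
      rw [this]; ring
    rw [hcast, hjk]
    have hang : π * (((d:ℕ):ℝ) - n) / n = π * d / n - π := by
      field_simp
    rw [hang, Real.sin_sub_pi, abs_neg]
    exact abs_of_nonneg (sin_div_nonneg n _ hn (by omega))

end Stmt14Aux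

open Classical in
/-- Number of ordered pairs of distinct points of `S` at distance exactly `1`
(twice the number of unordered such pairs). -/
noncomputable def unitPairs {d : ℕ} (S : Finset (EuclideanSpace ℝ (Fin d))) : ℕ :=
  (S.offDiag.filter fun p => dist p.1 p.2 = 1).card

/-- For every odd `n ≥ 3` there exist `n` concyclic points of diameter 1 in the
plane with exactly `n` diameter pairs. -/
theorem stmt_14 (n : ℕ) (hn : 3 ≤ n) (hodd : Odd n) :
    ∃ (S : Finset (EuclideanSpace ℝ (Fin 2))) (c : EuclideanSpace ℝ (Fin 2)) (r : ℝ),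
      S.card = n ∧ (∀ x ∈ S, dist x c = r) ∧
      (∀ x ∈ S, ∀ y ∈ S, dist x y ≤ 1) ∧
      unitPairs S = 2 * n := by
  classical
  haveI : NeZero n := ⟨by omega⟩
  obtain ⟨t, ht⟩ := hodd
  have hπ := Real.pi_pos
  have hN : (0:ℝ) < n := by positivity
  have hcosθ : (0:ℝ) < Real.cos (π/(2*n)) := by
    apply Real.cos_pos_of_mem_Ioo
    constructor
    · have : (0:ℝ) < π/(2*n) := by positivity
      linarith
    · have hn3 : (3:ℝ) ≤ n := by exact_mod_cast hn
      rw [div_lt_div_iff₀ (by positivity) (by norm_num)]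
      nlinarith
  set r : ℝ := 1/(2*Real.cos (π/(2*n))) with hr
  have hrpos : 0 < r := by positivity
  have hrc : 2 * r * Real.cos (π/(2*n)) = 1 := by
    rw [hr]; field_simp
  set p : ZMod n → EuclideanSpace ℝ (Fin 2) :=
    fun j => Stmt14Aux.pt r (2*π*j.val/n) with hp
  have hdist : ∀ j k : ZMod n,
      dist (p j) (p k) = 2*r*Real.sin (π * (((j-k).val : ℕ) : ℝ) / n) := by
    intro j k
    rw [hp]
    dsimp only
    rw [Stmt14Aux.dist_pt _ _ _ hrpos.le, Stmt14Aux.abs_sin_eq]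
  -- dist ≤ 1
  have hle1 : ∀ j k : ZMod n, dist (p j) (p k) ≤ 1 := by
    intro j k
    rw [hdist]
    have := (Stmt14Aux.sin_le n ((j-k).val) hn ⟨t, ht⟩ (ZMod.val_lt _)).1
    nlinarith
  -- injectivity
  have hinj : Function.Injective p := by
    intro j k h
    have h0 : dist (p j) (p k) = 0 := by rw [h, dist_self]
    rw [hdist] at h0
    have hs : Real.sin (π * (((j-k).val : ℕ) : ℝ) / n) = 0 := by
      rcases mul_eq_zero.mp h0 with h' | h'
      · nlinarith
      · exact h'
    have hd0 : (j - k).val = 0 := by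
      by_contra hne
      have h1 : 1 ≤ (j-k).val := Nat.one_le_iff_ne_zero.mpr hne
      have h2 := ZMod.val_lt (j - k)
      have : (0:ℝ) < Real.sin (π * (((j-k).val : ℕ) : ℝ) / n) := by
        apply Real.sin_pos_of_pos_of_lt_pi
        · have : (1:ℝ) ≤ ((j-k).val : ℝ) := by exact_mod_cast h1
          positivity
        · rw [div_lt_iff₀ hN]
          have : (((j-k).val : ℕ) : ℝ) < n := by exact_mod_cast h2
          nlinarith
      linarith
    have : j - k = 0 := by
      rwa [← ZMod.val_eq_zero]
    exact sub_eq_zero.mp this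
  set a : ZMod n := (((n-1)/2 : ℕ) : ZMod n) with ha
  have ha_val : a.val = (n-1)/2 := ZMod.val_cast_of_lt (by omega)
  have hna : -a = ((((n+1)/2 : ℕ)) : ZMod n) := by
    have hsum : a + ((((n+1)/2 : ℕ)) : ZMod n) = 0 := by
      rw [ha, ← Nat.cast_add, show (n-1)/2 + (n+1)/2 = n by omega, ZMod.natCast_self]
    exact neg_eq_of_add_eq_zero_right hsum
  have hna_val : (-a).val = (n+1)/2 := by
    rw [hna]; exact ZMod.val_cast_of_lt (by omega)
  have hane : a ≠ -a := by
    intro hcontra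
    have := congrArg ZMod.val hcontra
    rw [ha_val, hna_val] at this
    omega
  have ha0 : a ≠ 0 := by
    intro hcontra
    have := congrArg ZMod.val hcontra
    rw [ha_val, ZMod.val_zero] at this
    omega
  -- characterization of distance-1 pairs
  have hone : ∀ j k : ZMod n, dist (p j) (p k) = 1 ↔ (j - k = a ∨ j - k = -a) := by
    intro j k
    rw [hdist]
    have hback : (((j-k).val : ℕ) : ZMod n) = j - k := by
      rw [ZMod.natCast_val, ZMod.cast_id]
    have hval := ZMod.val_lt (j - k)
    constructor
    · intro h1
      have hs : Real.sin (π * (((j-k).val : ℕ) : ℝ) / n) = Real.cos (π/(2*n)) := by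
        have h2 : 2 * r * Real.sin (π * (((j-k).val : ℕ) : ℝ) / n)
            = 2 * r * Real.cos (π/(2*n)) := by rw [h1, hrc]
        exact mul_left_cancel₀ (by positivity) h2
      have := (Stmt14Aux.sin_le n ((j-k).val) hn ⟨t, ht⟩ hval).2.mp hs
      rcases this with h' | h'
      · left
        rw [← hback, show (j-k).val = (n-1)/2 by omega, ← ha]
      · right
        rw [← hback, show (j-k).val = (n+1)/2 by omega, ← hna]
    · intro h1
      have hvv : (j - k).val = (n-1)/2 ∨ (j - k).val = (n+1)/2 := by
        rcases h1 with h' | h'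
        · left; rw [h', ha_val]
        · right; rw [h', hna_val]
      have hs : 2 * (j-k).val + 1 = n ∨ 2 * (j-k).val = n + 1 := by omega
      have := (Stmt14Aux.sin_le n ((j-k).val) hn ⟨t, ht⟩ hval).2.mpr hs
      rw [this, hrc]
  set S : Finset (EuclideanSpace ℝ (Fin 2)) := Finset.image p Finset.univ with hS
  have hcardS : S.card = n := by
    rw [hS, Finset.card_image_of_injective _ hinj, Finset.card_univ, ZMod.card]
  refine ⟨S, 0, r, hcardS, ?_, ?_, ?_⟩
  · intro x hx
    rw [hS, Finset.mem_image] at hx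
    obtain ⟨j, _, rfl⟩ := hx
    exact Stmt14Aux.dist_pt_center r _ hrpos.le
  · intro x hx y hy
    rw [hS, Finset.mem_image] at hx hy
    obtain ⟨j, _, rfl⟩ := hx
    obtain ⟨k, _, rfl⟩ := hy
    exact hle1 j k
  · -- counting
    have hmemS : ∀ j : ZMod n, p j ∈ S := fun j =>
      Finset.mem_image_of_mem p (Finset.mem_univ j)
    set f1 : ZMod n → _ := fun j => (p j, p (j + a)) with hf1
    set f2 : ZMod n → _ := fun j => (p j, p (j - a)) with hf2
    have hF : S.offDiag.filter (fun q => dist q.1 q.2 = 1)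
        = Finset.image f1 Finset.univ ∪ Finset.image f2 Finset.univ := by
      ext q
      simp only [Finset.mem_filter, Finset.mem_offDiag, Finset.mem_union,
        Finset.mem_image, Finset.mem_univ, true_and]
      constructor
      · rintro ⟨⟨h1, h2, hne⟩, hdq⟩
        rw [hS, Finset.mem_image] at h1 h2
        obtain ⟨j, _, hj⟩ := h1
        obtain ⟨k, _, hk⟩ := h2
        rw [← hj, ← hk] at hdq
        rcases (hone j k).mp hdq with h' | h'
        · right
          refine ⟨j, ?_⟩
          have hk' : j - a = k := by linear_combination h'
          show (p j, p (j - a)) = q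
          rw [hk']
          exact Prod.ext hj hk
        · left
          refine ⟨j, ?_⟩
          have hk' : j + a = k := by linear_combination h'
          show (p j, p (j + a)) = q
          rw [hk']
          exact Prod.ext hj hk
      · rintro (⟨j, rfl⟩ | ⟨j, rfl⟩)
        · refine ⟨⟨hmemS j, hmemS (j + a), ?_⟩, ?_⟩
          · intro hcontra
            have := hinj hcontra
            have : a = 0 := by linear_combination -this
            exact ha0 this
          · apply (hone j (j + a)).mpr
            right
            ring
        · refine ⟨⟨hmemS j, hmemS (j - a), ?_⟩, ?_⟩
          · intro hcontra
            have := hinj hcontra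
            have : a = 0 := by linear_combination this
            exact ha0 this
          · apply (hone j (j - a)).mpr
            left
            ring
    have hf1inj : Function.Injective f1 := by
      intro x y h
      rw [hf1] at h
      exact hinj (congrArg Prod.fst h)
    have hf2inj : Function.Injective f2 := by
      intro x y h
      rw [hf2] at h
      exact hinj (congrArg Prod.fst h)
    have hdisj : Disjoint (Finset.image f1 Finset.univ) (Finset.image f2 Finset.univ) := by
      rw [Finset.disjoint_left]
      rintro q hq1 hq2
      rw [Finset.mem_image] at hq1 hq2
      obtain ⟨j, _, hj⟩ := hq1
      obtain ⟨k, _, hk⟩ := hq2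
      have h1 : p j = p k := by
        rw [← hj] at hk
        exact (congrArg Prod.fst hk).symm
      have hjk := hinj h1
      subst hjk
      have h2 : p (j + a) = p (j - a) := by
        rw [← hj] at hk
        exact (congrArg Prod.snd hk).symm
      have := hinj h2
      apply hane
      linear_combination this
    have hcount : (S.offDiag.filter (fun q => dist q.1 q.2 = 1)).card = 2 * n := by
      rw [hF, Finset.card_union_of_disjoint hdisj,
        Finset.card_image_of_injective _ hf1inj,
        Finset.card_image_of_injective _ hf2inj,
        Finset.card_univ, ZMod.card]
      ring
    unfold unitPairs
    convert hcount using 2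
end

section
/- For d = 2p ≥ 4 even, the maximum number u_d(n) of unit-distance pairs among n points in ℝ^d satisfies u_d(n) ≥ t_p(n), where t_p(n) is the number of edges of the Turán p-partite graph on n vertices. -/
noncomputable section LenzAux

/-- Rational parametrization of the unit circle. -/
def circA (m : ℕ) : ℝ := (1 - (m : ℝ) ^ 2) / (1 + (m : ℝ) ^ 2)

def circB (m : ℕ) : ℝ := (2 * (m : ℝ)) / (1 + (m : ℝ) ^ 2)

lemma circ_denom (m : ℕ) : (1 : ℝ) + (m : ℝ) ^ 2 ≠ 0 := by positivity

lemma circ_sq (m : ℕ) : circA m ^ 2 + circB m ^ 2 = 1 := by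
  have h := circ_denom m
  unfold circA circB
  field_simp [circA, circB]
  ring

lemma circ_inj {m m' : ℕ} (hA : circA m = circA m') : m = m' := by
  have h := circ_denom m
  have h' := circ_denom m'
  rw [circA, circA, div_eq_div_iff h h'] at hA
  have h2 : ((m : ℝ)) ^ 2 = (m' : ℝ) ^ 2 := by nlinarith
  have : (m : ℝ) = (m' : ℝ) := by
    nlinarith [Nat.cast_nonneg (α := ℝ) m, Nat.cast_nonneg (α := ℝ) m']
  exact_mod_cast this

/-- Lenz point on circle `c` with parameter `m` in ℝ^d. -/
def lenzPt (d c m : ℕ) : EuclideanSpace ℝ (Fin d) :=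
  WithLp.toLp 2 fun k => if (k : ℕ) = 2 * c then (Real.sqrt 2)⁻¹ * circA m
    else if (k : ℕ) = 2 * c + 1 then (Real.sqrt 2)⁻¹ * circB m else 0

lemma r_sq : ((Real.sqrt 2)⁻¹) ^ 2 = 2⁻¹ := by
  rw [inv_pow, Real.sq_sqrt (by norm_num : (0:ℝ) ≤ 2)]

lemma r_ne : ((Real.sqrt 2)⁻¹ : ℝ) ≠ 0 := by
  have : Real.sqrt 2 ≠ 0 := by positivity
  simp [this]

lemma lenzPt_ne (d c m : ℕ) (k : Fin d) (h1 : (k : ℕ) ≠ 2 * c) (h2 : (k : ℕ) ≠ 2 * c + 1) :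
    lenzPt d c m k = 0 := by simp [lenzPt, h1, h2]

lemma lenzPt_fst (d c m : ℕ) (k : Fin d) (h1 : (k : ℕ) = 2 * c) :
    lenzPt d c m k = (Real.sqrt 2)⁻¹ * circA m := by simp [lenzPt, h1]

lemma lenzPt_snd (d c m : ℕ) (k : Fin d) (h1 : (k : ℕ) = 2 * c + 1) :
    lenzPt d c m k = (Real.sqrt 2)⁻¹ * circB m := by
  have h2 : (k : ℕ) ≠ 2 * c := by omega
  simp [lenzPt, h1, h2]

lemma lenzPt_dist {p d : ℕ} (hd : d = 2 * p) {c c' : ℕ} (hc : c < p) (hc' : c' < p)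
    (hne : c ≠ c') (m m' : ℕ) : dist (lenzPt d c m) (lenzPt d c' m') = 1 := by
  have h0 : 2 * c < d := by omega
  have h1 : 2 * c + 1 < d := by omega
  have h0' : 2 * c' < d := by omega
  have h1' : 2 * c' + 1 < d := by omega
  set x := lenzPt d c m with hx
  set y := lenzPt d c' m' with hy
  rw [EuclideanSpace.dist_eq]
  have key : ∑ i, dist (x i) (y i) ^ 2 = 1 := by
    have hsub : ({⟨2*c, h0⟩, ⟨2*c+1, h1⟩, ⟨2*c', h0'⟩, ⟨2*c'+1, h1'⟩} : Finset (Fin d))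
        ⊆ Finset.univ := Finset.subset_univ _
    rw [← Finset.sum_subset hsub]
    · have e01 : (⟨2*c, h0⟩ : Fin d) ≠ ⟨2*c+1, h1⟩ := by simp [Fin.ext_iff]
      have e02 : (⟨2*c, h0⟩ : Fin d) ≠ ⟨2*c', h0'⟩ := by simp [Fin.ext_iff]; omega
      have e03 : (⟨2*c, h0⟩ : Fin d) ≠ ⟨2*c'+1, h1'⟩ := by simp [Fin.ext_iff]; omega
      have e12 : (⟨2*c+1, h1⟩ : Fin d) ≠ ⟨2*c', h0'⟩ := by simp [Fin.ext_iff]; omega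
      have e13 : (⟨2*c+1, h1⟩ : Fin d) ≠ ⟨2*c'+1, h1'⟩ := by simp [Fin.ext_iff]; omega
      have e23 : (⟨2*c', h0'⟩ : Fin d) ≠ ⟨2*c'+1, h1'⟩ := by simp [Fin.ext_iff]
      rw [Finset.sum_insert (by simp [e01, e02, e03]),
        Finset.sum_insert (by simp [e12, e13]),
        Finset.sum_insert (by simp [e23]), Finset.sum_singleton]
      have v0 : x ⟨2*c, h0⟩ = (Real.sqrt 2)⁻¹ * circA m := lenzPt_fst _ _ _ _ rfl
      have v1 : x ⟨2*c+1, h1⟩ = (Real.sqrt 2)⁻¹ * circB m := lenzPt_snd _ _ _ _ rfl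
      have v2 : y ⟨2*c', h0'⟩ = (Real.sqrt 2)⁻¹ * circA m' := lenzPt_fst _ _ _ _ rfl
      have v3 : y ⟨2*c'+1, h1'⟩ = (Real.sqrt 2)⁻¹ * circB m' := lenzPt_snd _ _ _ _ rfl
      have w0 : y ⟨2*c, h0⟩ = 0 := lenzPt_ne _ _ _ _
        (show (2*c : ℕ) ≠ 2*c' by omega) (show (2*c : ℕ) ≠ 2*c'+1 by omega)
      have w1 : y ⟨2*c+1, h1⟩ = 0 := lenzPt_ne _ _ _ _
        (show (2*c+1 : ℕ) ≠ 2*c' by omega) (show (2*c+1 : ℕ) ≠ 2*c'+1 by omega)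
      have w2 : x ⟨2*c', h0'⟩ = 0 := lenzPt_ne _ _ _ _
        (show (2*c' : ℕ) ≠ 2*c by omega) (show (2*c' : ℕ) ≠ 2*c+1 by omega)
      have w3 : x ⟨2*c'+1, h1'⟩ = 0 := lenzPt_ne _ _ _ _
        (show (2*c'+1 : ℕ) ≠ 2*c by omega) (show (2*c'+1 : ℕ) ≠ 2*c+1 by omega)
      rw [v0, v1, v2, v3, w0, w1, w2, w3]
      simp only [Real.dist_eq]
      rw [sub_zero, sub_zero, zero_sub, zero_sub, abs_neg, abs_neg,
        sq_abs, sq_abs, sq_abs, sq_abs]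
      have hm := circ_sq m
      have hm' := circ_sq m'
      have hr := r_sq
      nlinarith [hm, hm', hr]
    · intro k _ hk
      simp only [Finset.mem_insert, Finset.mem_singleton] at hk
      push_neg at hk
      obtain ⟨k0, k1, k2, k3⟩ := hk
      have hx0 : x k = 0 := lenzPt_ne _ _ _ _
        (fun h => k0 (Fin.ext h)) (fun h => k1 (Fin.ext h))
      have hy0 : y k = 0 := lenzPt_ne _ _ _ _
        (fun h => k2 (Fin.ext h)) (fun h => k3 (Fin.ext h))
      simp [hx0, hy0]
  rw [key, Real.sqrt_one]

lemma lenzPt_inj {p d : ℕ} (hd : d = 2 * p) {c c' m m' : ℕ} (hc : c < p) (hc' : c' < p)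
    (h : lenzPt d c m = lenzPt d c' m') : c = c' ∧ m = m' := by
  have h0 : 2 * c < d := by omega
  have h1 : 2 * c + 1 < d := by omega
  have hcc : c = c' := by
    by_contra hne
    have e0 : lenzPt d c m ⟨2*c, h0⟩ = lenzPt d c' m' ⟨2*c, h0⟩ := by rw [h]
    have e1 : lenzPt d c m ⟨2*c+1, h1⟩ = lenzPt d c' m' ⟨2*c+1, h1⟩ := by rw [h]
    rw [lenzPt_fst _ _ _ _ rfl, lenzPt_ne _ _ _ _
      (show (2*c : ℕ) ≠ 2*c' by omega) (show (2*c : ℕ) ≠ 2*c'+1 by omega)] at e0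
    rw [lenzPt_snd _ _ _ _ rfl, lenzPt_ne _ _ _ _
      (show (2*c+1 : ℕ) ≠ 2*c' by omega) (show (2*c+1 : ℕ) ≠ 2*c'+1 by omega)] at e1
    have hA : circA m = 0 := by
      rcases mul_eq_zero.1 e0 with h | h
      · exact absurd h r_ne
      · exact h
    have hB : circB m = 0 := by
      rcases mul_eq_zero.1 e1 with h | h
      · exact absurd h r_ne
      · exact h
    have := circ_sq m
    rw [hA, hB] at this
    norm_num at this
  subst hcc
  refine ⟨rfl, ?_⟩
  have e0 : lenzPt d c m ⟨2*c, h0⟩ = lenzPt d c m' ⟨2*c, h0⟩ := by rw [h]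
  rw [lenzPt_fst _ _ _ _ rfl, lenzPt_fst _ _ _ _ rfl] at e0
  exact circ_inj (mul_left_cancel₀ r_ne e0)

end LenzAux

/-- Lenz lower bound: for even `d = 2p ≥ 4` there is an `n`-point set in ℝ^d with at
least `t_p(n)` unit-distance pairs. -/
theorem stmt_16 (p : ℕ) (hp : 2 ≤ p) (d : ℕ) (hd : d = 2 * p) (n : ℕ) :
    ∃ S : Finset (EuclideanSpace ℝ (Fin d)), S.card = n ∧
      2 * (SimpleGraph.turanGraph n p).edgeFinset.card ≤ unitPairs S := by
  classical
  have hp0 : 0 < p := by omega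
  set f : Fin n → EuclideanSpace ℝ (Fin d) :=
    fun i => lenzPt d ((i : ℕ) % p) ((i : ℕ) / p) with hf
  have hfinj : Function.Injective f := by
    intro i j hij
    obtain ⟨hc, hm⟩ := lenzPt_inj hd (Nat.mod_lt _ hp0) (Nat.mod_lt _ hp0) hij
    refine Fin.ext ?_
    rw [← Nat.div_add_mod (i : ℕ) p, ← Nat.div_add_mod (j : ℕ) p, hc, hm]
  refine ⟨Finset.image f Finset.univ, ?_, ?_⟩
  · rw [Finset.card_image_of_injective _ hfinj, Finset.card_univ, Fintype.card_fin]
  · rw [SimpleGraph.two_mul_card_edgeFinset, unitPairs]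
    apply Finset.card_le_card_of_injOn (fun q => (f q.1, f q.2))
    · intro q hq
      simp only [Finset.mem_filter, Finset.mem_univ, true_and] at hq
      have hadj : ((q.1 : ℕ)) % p ≠ (q.2 : ℕ) % p := by
        simp [SimpleGraph.turanGraph] at hq
        exact (Finset.mem_filter.1 hq).2
      refine Finset.mem_filter.2 ⟨Finset.mem_offDiag.2
        ⟨Finset.mem_image_of_mem _ (Finset.mem_univ _),
         Finset.mem_image_of_mem _ (Finset.mem_univ _), ?_⟩, ?_⟩
      · intro hEq
        exact hadj (lenzPt_inj hd (Nat.mod_lt _ hp0) (Nat.mod_lt _ hp0) hEq).1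
      · exact lenzPt_dist hd (Nat.mod_lt _ hp0) (Nat.mod_lt _ hp0) hadj _ _
    · intro a _ b _ hab
      have h := Prod.ext_iff.1 hab
      exact Prod.ext (hfinj h.1) (hfinj h.2)
end

section
/- The complete (p+1)-partite graph K_{p+1}(3) with 3 vertices in each class does not embed in ℝ^d as a unit-distance graph when d = 2p: there do not exist sets A₁, …, A_{p+1} ⊆ ℝ^{2p}, each of size 3 and consisting of affinely independent (non-collinear) triples, with every point of Aᵢ at distance 1 from every point of Aⱼ for all i ≠ j. -/
open Module

/-- `K_{p+1}(3)` with non-collinear classes does not embed as a unit-distance graph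
in ℝ^{2p}. -/
theorem stmt_18 (p : ℕ) (hp : 2 ≤ p)
    (A : Fin (p + 1) → Finset (EuclideanSpace ℝ (Fin (2 * p))))
    (hcard : ∀ i, (A i).card = 3)
    (hncol : ∀ i, ¬ Collinear ℝ (A i : Set (EuclideanSpace ℝ (Fin (2 * p)))))
    (hdist : ∀ i j, i ≠ j → ∀ a ∈ A i, ∀ b ∈ A j, dist a b = 1) :
    False := by
  classical

  have hE : finrank ℝ (EuclideanSpace ℝ (Fin (2 * p))) = 2 * p := finrank_euclideanSpace_fin
  set V : Fin (p + 1) → Submodule ℝ (EuclideanSpace ℝ (Fin (2 * p))) := fun i => vectorSpan ℝ (A i : Set (EuclideanSpace ℝ (Fin (2 * p)))) with hVdef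
  -- orthogonality of generators
  have hgen : ∀ i j, i ≠ j → ∀ a ∈ A i, ∀ a' ∈ A i, ∀ b ∈ A j, ∀ b' ∈ A j,
      inner ℝ (a - a') (b - b') = (0 : ℝ) := by
    intro i j hij a ha a' ha' b hb b' hb'
    have H : ∀ x ∈ A i, ∀ y ∈ A j, ‖x - y‖ ^ 2 = 1 := by
      intro x hx y hy
      rw [← dist_eq_norm, hdist i j hij x hx y hy]; norm_num
    have e1 := norm_sub_sq_real a b; rw [H a ha b hb] at e1
    have e2 := norm_sub_sq_real a b'; rw [H a ha b' hb'] at e2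
    have e3 := norm_sub_sq_real a' b; rw [H a' ha' b hb] at e3
    have e4 := norm_sub_sq_real a' b'; rw [H a' ha' b' hb'] at e4
    rw [inner_sub_left, inner_sub_right, inner_sub_right]
    linarith
  have key : ∀ i j, i ≠ j → V i ≤ (V j)ᗮ := by
    intro i j hij
    rw [hVdef]
    simp only [vectorSpan_def]
    rw [Submodule.span_le]
    rintro v ⟨a, ha, a', ha', rfl⟩
    have hj : vectorSpan ℝ (A j : Set (EuclideanSpace ℝ (Fin (2 * p)))) ≤ (ℝ ∙ (a -ᵥ a'))ᗮ := by
      rw [vectorSpan_def, Submodule.span_le]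
      rintro w ⟨b, hb, b', hb', rfl⟩
      rw [SetLike.mem_coe, Submodule.mem_orthogonal_singleton_iff_inner_right]
      simp only [vsub_eq_sub]
      exact hgen i j hij a ha a' ha' b hb b' hb'
    rw [SetLike.mem_coe, Submodule.mem_orthogonal]
    intro u hu
    have h := hj hu
    rwa [Submodule.mem_orthogonal_singleton_iff_inner_left] at h
  have horth : OrthogonalFamily ℝ (fun i => V i) (fun i => (V i).subtypeₗᵢ) := by
    intro i j hij v w
    have h := key i j hij v.2
    rw [Submodule.mem_orthogonal] at h
    have := h w w.2
    show inner ℝ (v : (EuclideanSpace ℝ (Fin (2 * p)))) (w : (EuclideanSpace ℝ (Fin (2 * p)))) = (0 : ℝ)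
    rw [real_inner_comm]
    exact this
  have hInd : iSupIndep V := horth.independent
  -- affinely independent triples
  have hpts : ∀ i, ∃ q : Fin 3 → (EuclideanSpace ℝ (Fin (2 * p))), AffineIndependent ℝ q ∧ ∀ k, q k ∈ A i := by
    intro i
    obtain ⟨a, b, c, hab, hac, hbc, habc⟩ := Finset.card_eq_three.mp (hcard i)
    refine ⟨![a, b, c], ?_, ?_⟩
    · rw [affineIndependent_iff_not_collinear]
      have h := hncol i
      rw [habc] at h
      have hr : Set.range ![a, b, c] = (({a, b, c} : Finset (EuclideanSpace ℝ (Fin (2 * p)))) : Set (EuclideanSpace ℝ (Fin (2 * p)))) := by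
        ext x
        simp [Fin.exists_fin_two, Fin.exists_fin_succ]
        tauto
      rw [hr]
      exact h
    · intro k; fin_cases k <;> simp [habc]
  choose q hqai hqA using hpts
  have hLI : ∀ i, LinearIndependent ℝ
      (fun k : {x : Fin 3 // x ≠ 0} => q i k -ᵥ q i 0) := fun i =>
    (affineIndependent_iff_linearIndependent_vsub ℝ (q i) 0).mp (hqai i)
  have hmem : ∀ i (k : {x : Fin 3 // x ≠ 0}), (q i k -ᵥ q i (0 : Fin 3)) ∈ V i := fun i k =>
    vsub_mem_vectorSpan ℝ (hqA i k) (hqA i 0)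
  have hbig : LinearIndependent ℝ
      (fun x : Σ _ : Fin (p + 1), {y : Fin 3 // y ≠ 0} => q x.1 x.2 -ᵥ q x.1 0) := by
    apply linearIndependent_iUnion_finite
      (f := fun i (k : {y : Fin 3 // y ≠ 0}) => q i k -ᵥ q i 0) hLI
    intro i t _ hit
    have h1 : Submodule.span ℝ
        (Set.range fun k : {y : Fin 3 // y ≠ 0} => q i k -ᵥ q i 0) ≤ V i := by
      rw [Submodule.span_le]; rintro _ ⟨k, rfl⟩; exact hmem i k
    have h2 : (⨆ j ∈ t, Submodule.span ℝ
        (Set.range fun k : {y : Fin 3 // y ≠ 0} => q j k -ᵥ q j 0)) ≤ ⨆ (j) (_ : j ≠ i), V j := by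
      refine iSup₂_le fun j hj => ?_
      refine le_trans ?_ (le_iSup₂ (f := fun j (_ : j ≠ i) => V j) j (fun h => hit (h ▸ hj)))
      rw [Submodule.span_le]; rintro _ ⟨k, rfl⟩; exact hmem j k
    exact (hInd i).mono h1 h2
  have hcard2 := hbig.fintype_card_le_finrank
  rw [hE] at hcard2
  have hc3 : Fintype.card {y : Fin 3 // y ≠ 0} = 2 := by
    simp [Fintype.card_subtype_compl]
  rw [Fintype.card_sigma] at hcard2
  simp [hc3] at hcard2
  omega
end
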